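/- Let B be a topological group and let A be a subgroup of B equipped with a topology making A a topological group and such that the inclusion map A → B is continuous. Assume that for every open subset U of A and each a ∈ U there exist an open subset V of B with 1 ∈ V and an open subset U_a of A with a ∈ U_a such that b⁻¹ U_a b ⊆ U for every b ∈ V. Let N = { b ∈ B | for every open subset U of A, both bUb⁻¹ and b⁻¹Ub are contained in A and are open subsets of A }, endowed with the subspace topology inherited from B. Then A ⊆ N, A is a normal subgroup of N, and the map A × N → A, (a,n) ↦ n⁻¹ a n, is continuous (where A carries its given topology). -/

import Mathlib

open Topology

/-- Let `A` be a subgroup of a topological group `B`, carrying its own group topology `tA`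
with continuous inclusion into `B`. Assume condition (b): for every `tA`-open `U ⊆ A` and each
`a ∈ U` there are an open `V ⊆ B` with `1 ∈ V` and a `tA`-open `U_a ⊆ A` with `a ∈ U_a` such
that `b⁻¹ U_a b ⊆ U` for all `b ∈ V`. Let
`N = { b ∈ B | for every tA-open U ⊆ A, both bUb⁻¹ and b⁻¹Ub are contained in A and are open
subsets of A }`, with the subspace topology from `B`. Then `A ⊆ N`, `A` is normal in `N`, and
the map `A × N → A`, `(a, n) ↦ n⁻¹ * a * n`, is continuous. -/
theorem stmt3 {B : Type*} [Group B] [TopologicalSpace B] [IsTopologicalGroup B]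
    (A : Subgroup B) (tA : TopologicalSpace A)
    (_ : @IsTopologicalGroup A tA _)
    (hincl : Continuous[tA, inferInstance] (fun a : A => (a : B)))
    (hb : ∀ U : Set A, IsOpen[tA] U → ∀ a ∈ U, ∃ V : Set B, IsOpen V ∧ (1 : B) ∈ V ∧
      ∃ Ua : Set A, IsOpen[tA] Ua ∧ a ∈ Ua ∧
        ∀ b ∈ V, (fun u : A => b⁻¹ * (u : B) * b) '' Ua ⊆ Subtype.val '' U)
    (N : Set B)
    (hN : N = {b : B | ∀ U : Set A, IsOpen[tA] U →
        ((fun u : A => b * (u : B) * b⁻¹) '' U ⊆ (A : Set B) ∧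
          IsOpen[tA] {x : A | (x : B) ∈ (fun u : A => b * (u : B) * b⁻¹) '' U}) ∧
        ((fun u : A => b⁻¹ * (u : B) * b) '' U ⊆ (A : Set B) ∧
          IsOpen[tA] {x : A | (x : B) ∈ (fun u : A => b⁻¹ * (u : B) * b) '' U})}) :
    (A : Set B) ⊆ N ∧
    (∀ n ∈ N, ∀ a ∈ A, n⁻¹ * a * n ∈ A) ∧
    (∀ φ : A × N → A,
      (∀ p : A × N, (φ p : B) = (p.2 : B)⁻¹ * (p.1 : B) * (p.2 : B)) →
      Continuous[@instTopologicalSpaceProd A N tA inferInstance, tA] φ) := by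
  rename_i hAtg
  letI := tA
  haveI : IsTopologicalGroup A := hAtg
  have key : ∀ g : A, ∀ U : Set A, IsOpen U →
      ((fun u : A => (g : B) * (u : B) * (g : B)⁻¹) '' U ⊆ (A : Set B) ∧
        IsOpen {x : A | (x : B) ∈ (fun u : A => (g : B) * (u : B) * (g : B)⁻¹) '' U}) := by
    intro g U hU
    constructor
    · rintro x ⟨u, hu, rfl⟩
      exact mul_mem (mul_mem g.2 u.2) (inv_mem g.2)
    · have hset : {x : A | (x : B) ∈ (fun u : A => (g : B) * (u : B) * (g : B)⁻¹) '' U}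
          = (fun u : A => g * u * g⁻¹) '' U := by
        ext x
        simp only [Set.mem_setOf_eq, Set.mem_image]
        constructor
        · rintro ⟨u, hu, h⟩
          exact ⟨u, hu, by ext; push_cast; exact h⟩
        · rintro ⟨u, hu, rfl⟩
          exact ⟨u, hu, by push_cast; rfl⟩
      rw [hset]
      have h2 := (Homeomorph.mulLeft g).isOpenMap _
        ((Homeomorph.mulRight g⁻¹).isOpenMap _ hU)
      rw [Set.image_image] at h2
      convert h2 using 2
      exact mul_assoc _ _ _
  refine ⟨?_, ?_, ?_⟩
  · intro x hx
    rw [hN]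
    intro U hU
    refine ⟨key ⟨x, hx⟩ U hU, ?_⟩
    simpa using key (⟨x, hx⟩ : A)⁻¹ U hU
  · intro n hn a ha
    rw [hN] at hn
    have := ((hn Set.univ isOpen_univ).2).1
    exact this ⟨⟨a, ha⟩, Set.mem_univ _, rfl⟩
  · intro φ hφ
    rw [continuous_def]
    intro U hU
    rw [isOpen_prod_iff]
    rintro a n hmem
    simp only [Set.mem_preimage] at hmem
    set m : B := (n : B) with hm_def
    have hmN := (Set.ext_iff.mp hN m).mp n.2
    obtain ⟨V, hV, h1V, Ua, hUa, hc0Ua, hVcond⟩ := hb U hU (φ (a, n)) hmem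
    -- neighborhood of a
    set W : Set A := {x : A | (x : B) ∈ (fun u : A => m * (u : B) * m⁻¹) '' Ua} with hW_def
    have hWopen : IsOpen W := ((hmN Ua hUa).1).2
    have haW : a ∈ W := by
      refine ⟨φ (a, n), hc0Ua, ?_⟩
      show m * (φ (a, n) : B) * m⁻¹ = (a : B)
      rw [hφ (a, n)]
      show m * ((n : B)⁻¹ * (a : B) * (n : B)) * m⁻¹ = (a : B)
      rw [hm_def]
      group
    -- neighborhood of n
    set T : Set N := (fun k : N => m⁻¹ * (k : B)) ⁻¹' V with hT_def
    have hTopen : IsOpen T :=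
      (continuous_const.mul continuous_subtype_val).isOpen_preimage V hV
    have hnT : n ∈ T := by
      simp only [hT_def, Set.mem_preimage, hm_def, inv_mul_cancel]
      exact h1V
    refine ⟨W, T, hWopen, hTopen, haW, hnT, ?_⟩
    rintro ⟨x, k⟩ ⟨hxW, hkT⟩
    simp only [Set.mem_preimage]
    obtain ⟨u, huUa, hu⟩ := hxW
    have hu' : m * (u : B) * m⁻¹ = (x : B) := hu
    have hb' : m⁻¹ * (k : B) ∈ V := hkT
    have himg := hVcond (m⁻¹ * (k : B)) hb' ⟨u, huUa, rfl⟩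
    obtain ⟨z, hzU, hz⟩ := himg
    have hz' : (z : B) = (m⁻¹ * (k : B))⁻¹ * (u : B) * (m⁻¹ * (k : B)) := hz
    have hcalc : (z : B) = (φ (x, k) : B) := by
      rw [hφ (x, k)]
      show (z : B) = ((k : B))⁻¹ * (x : B) * (k : B)
      rw [hz', ← hu']
      group
    exact Subtype.ext hcalc ▸ hzU
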